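/- Let p ≥ 3 and b = span{h, e}, [h,e] = 2e over a field of characteristic p. For 0 ≤ n ≤ p-1, the b-module S̄^n(b) (adjoint action) is isomorphic to L(n) ⊗ (weight -n), where L(n) is the (n+1)-dimensional restricted simple sl_2-module of highest weight n restricted to b: concretely, S̄^n(b) has basis h^i e^j (i+j = n) with h-weights -2j for j = 0, ..., n, i.e., weights -2n, -2n+2, ..., 0, matching the weights of L(n) shifted by -n, and the operator ad(e) acts injectively on each nonzero weight space except the lowest. -/

import Mathlib

open MvPolynomial

/-- The adjoint action of `e` on `S̄(b)` (`X 0 = h`, `X 1 = e`):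
`ad(e)(h^i e^j) = -2i h^{i-1} e^{j+1}`. -/
noncomputable def adE (k : Type*) [Field k] :
    MvPolynomial (Fin 2) k →ₗ[k] MvPolynomial (Fin 2) k :=
  (-2 : k) • ((LinearMap.mulLeft k (X 1 : MvPolynomial (Fin 2) k)).comp
    (pderiv (0 : Fin 2)).toLinearMap)

/-- The adjoint action of `h` on `S̄(b)` (paper convention):
`ad(h)(h^i e^j) = -2j h^i e^j`. -/
noncomputable def adH (k : Type*) [Field k] :
    MvPolynomial (Fin 2) k →ₗ[k] MvPolynomial (Fin 2) k :=
  (-2 : k) • ((LinearMap.mulLeft k (X 1 : MvPolynomial (Fin 2) k)).comp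
    (pderiv (1 : Fin 2)).toLinearMap)

/-- Model of `L(n) ⊗ (-n)`: the `h`-action on the `(n+1)`-dimensional space with basis
`v_0, …, v_n`, where `v_j` has weight `-2j`. -/
noncomputable def modelH (k : Type*) [Field k] (n : ℕ) :
    (Fin (n + 1) → k) →ₗ[k] (Fin (n + 1) → k) :=
  LinearMap.pi fun j => (((-2 : ℤ) * ((j : ℕ) : ℤ) : ℤ) : k) • LinearMap.proj j

/-- Model of `L(n) ⊗ (-n)`: the `e`-action raising the weight by `2`, `v_j ↦ v_{j+1}`,
injective except on the lowest weight vector `v_n`. -/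
noncomputable def modelE (k : Type*) [Field k] (n : ℕ) :
    (Fin (n + 1) → k) →ₗ[k] (Fin (n + 1) → k) :=
  LinearMap.pi fun j => if (j : ℕ) = 0 then 0 else LinearMap.proj (j - 1)

section Aux

variable {k : Type*} [Field k]

lemma coeff_pderiv_aux (i : Fin 2) (m : Fin 2 →₀ ℕ) (f : MvPolynomial (Fin 2) k) :
    coeff m (pderiv i f) = ((m i + 1 : ℕ) : k) * coeff (m + Finsupp.single i 1) f := by
  induction f using MvPolynomial.induction_on' with
  | add f g hf hg => simp [hf, hg, mul_add]
  | monomial s a =>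
    rw [pderiv_monomial, coeff_monomial, coeff_monomial]
    by_cases hle : Finsupp.single i 1 ≤ s
    · have hs : s - Finsupp.single i 1 + Finsupp.single i 1 = s := tsub_add_cancel_of_le hle
      by_cases h : s - Finsupp.single i 1 = m
      · have hsm : s = m + Finsupp.single i 1 := by rw [← h, hs]
        rw [if_pos h, if_pos hsm]
        have hsi : s i = m i + 1 := by rw [hsm]; simp
        rw [hsi]; push_cast; ring
      · have hne : s ≠ m + Finsupp.single i 1 := by
          intro hc; apply h; rw [hc]; simp
        rw [if_neg h, if_neg hne, mul_zero]
    · have hsi : s i = 0 := by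
        by_contra hne
        exact hle (Finsupp.single_le_iff.mpr (Nat.one_le_iff_ne_zero.mpr hne))
      have hne : s ≠ m + Finsupp.single i 1 := by
        intro hc; rw [hc] at hsi; simp at hsi
      rw [if_neg hne, mul_zero]
      split <;> simp [hsi]

lemma adE_apply (f : MvPolynomial (Fin 2) k) :
    adE k f = (-2 : k) • (X 1 * pderiv 0 f) := rfl

lemma adH_apply (f : MvPolynomial (Fin 2) k) :
    adH k f = (-2 : k) • (X 1 * pderiv 1 f) := rfl

lemma degree_fin2 (d : Fin 2 →₀ ℕ) : d.degree = d 0 + d 1 := by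
  rw [Finsupp.degree_apply, Finset.sum_subset (Finset.subset_univ _), Fin.sum_univ_two]
  intro x _ hx
  simpa using Finsupp.notMem_support_iff.mp hx

end Aux

/-- For `0 ≤ n ≤ p - 1`, the `b`-module `S̄ⁿ(b)` (adjoint action; for `n ≤ p - 1` it is the
full degree-`n` homogeneous component) is isomorphic to `L(n) ⊗ (-n)`: the monomials
`h^i e^j`, `i + j = n`, have `h`-weights `-2j` (i.e. `-2n, -2n+2, …, 0`), `ad(e)` acts
injectively on each weight space except the lowest, and there is a linear bijection of the
degree-`n` component with the model of `L(n) ⊗ (-n)` intertwining the actions of `e`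
and `h`. -/
theorem hochschild_stmt18 (k : Type*) [Field k] (p : ℕ) [CharP k p] (hp : p.Prime)
    (h3 : 3 ≤ p) (n : ℕ) (hn : n ≤ p - 1) :
    (∀ i j : ℕ, i + j = n → adH k (X 0 ^ i * X 1 ^ j) =
      (((-2 : ℤ) * (j : ℤ) : ℤ) : k) • ((X 0 : MvPolynomial (Fin 2) k) ^ i * X 1 ^ j)) ∧
    (∀ j < n, adE k ((X 0 : MvPolynomial (Fin 2) k) ^ (n - j) * X 1 ^ j) ≠ 0) ∧
    ∃ ψ : MvPolynomial (Fin 2) k →ₗ[k] (Fin (n + 1) → k),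
      (∀ f ∈ homogeneousSubmodule (Fin 2) k n, ψ (adE k f) = modelE k n (ψ f)) ∧
      (∀ f ∈ homogeneousSubmodule (Fin 2) k n, ψ (adH k f) = modelH k n (ψ f)) ∧
      (∀ f ∈ homogeneousSubmodule (Fin 2) k n, ψ f = 0 → f = 0) ∧
      (∀ v : Fin (n + 1) → k, ∃ f ∈ homogeneousSubmodule (Fin 2) k n, ψ f = v) := by
  have hnp : n < p := by omega
  have h2k : (2 : k) ≠ 0 := by
    have := CharP.cast_eq_zero_iff k p 2
    intro hc
    have : p ∣ 2 := by
      have h2 : ((2 : ℕ) : k) = 0 := by push_cast; exact hc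
      exact (CharP.cast_eq_zero_iff k p 2).mp h2
    have := Nat.le_of_dvd (by norm_num) this
    omega
  have hcast_ne : ∀ m : ℕ, m ≠ 0 → m < p → ((m : k) ≠ 0) := by
    intro m hm0 hmp hc
    have hdvd : p ∣ m := (CharP.cast_eq_zero_iff k p m).mp hc
    have := Nat.le_of_dvd (Nat.pos_of_ne_zero hm0) hdvd
    omega
  have hfact_ne : ∀ m : ℕ, m < p → ((m.factorial : k) ≠ 0) := by
    intro m hmp hc
    have hdvd : p ∣ m.factorial := (CharP.cast_eq_zero_iff k p _).mp hc
    have := (Nat.Prime.dvd_factorial hp).mp hdvd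
    omega
  -- the scaling constants and exponents
  set c : ℕ → k := fun j => (-2 : k) ^ (n - j) * ((n - j).factorial : k) with hc_def
  have hc_ne : ∀ j : ℕ, j ≤ n → c j ≠ 0 := by
    intro j _
    exact mul_ne_zero (pow_ne_zero _ (neg_ne_zero.mpr h2k))
      (hfact_ne _ (by omega))
  set d : ℕ → (Fin 2 →₀ ℕ) := fun j => Finsupp.single 0 (n - j) + Finsupp.single 1 j
    with hd_def
  have hd0 : ∀ j, d j 0 = n - j := by
    intro j; simp [hd_def, Finsupp.single_apply]
  have hd1 : ∀ j, d j 1 = j := by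
    intro j; simp [hd_def, Finsupp.single_apply]
  refine ⟨?_, ?_, ?_⟩
  · -- part 1 : adH on monomials
    intro i j hij
    obtain rfl : i = n - j := by omega
    have hjn : j ≤ n := by omega
    have h1 : (X (0:Fin 2) : MvPolynomial (Fin 2) k) ^ (n - j) * X 1 ^ j
        = monomial (d j) 1 := by
      rw [hd_def, X_pow_eq_monomial, X_pow_eq_monomial, monomial_mul, mul_one]
    rw [adH_apply, h1, pderiv_monomial, hd1, one_mul]
    rcases Nat.eq_zero_or_pos j with hj | hj
    · subst hj
      simp
    · have hcancel : Finsupp.single (1:Fin 2) 1 + (d j - Finsupp.single 1 1) = d j := by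
        rw [add_comm]
        exact tsub_add_cancel_of_le (by rw [Finsupp.single_le_iff, hd1]; omega)
      rw [show (X 1 : MvPolynomial (Fin 2) k) = monomial (Finsupp.single 1 1) 1 from rfl]
      rw [monomial_mul, one_mul, hcancel, smul_monomial, smul_monomial]
      congr 1
      rw [smul_eq_mul, smul_eq_mul, mul_one]
      push_cast
      ring
  · -- part 2 : adE nonzero
    intro j hj
    have h1 : (X (0:Fin 2) : MvPolynomial (Fin 2) k) ^ (n - j) * X 1 ^ j
        = monomial (d j) 1 := by
      rw [hd_def, X_pow_eq_monomial, X_pow_eq_monomial, monomial_mul, mul_one]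
    rw [adE_apply, h1, pderiv_monomial]
    rw [show (X 1 : MvPolynomial (Fin 2) k) = monomial (Finsupp.single 1 1) 1 from rfl]
    rw [monomial_mul, smul_monomial, one_mul, one_mul, Ne, monomial_eq_zero, hd0]
    exact mul_ne_zero (neg_ne_zero.mpr h2k) (hcast_ne _ (by omega) (by omega))
  · -- part 3: the linear bijection
    refine ⟨LinearMap.pi (fun j : Fin (n+1) => c (j : ℕ) • lcoeff k (d (j : ℕ))), ?_, ?_, ?_, ?_⟩
    · -- intertwine E
      intro f _
      funext j
      obtain ⟨jj, hjj⟩ := j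
      rw [LinearMap.pi_apply, LinearMap.smul_apply, lcoeff_apply, adE_apply, coeff_smul]
      rw [modelE, LinearMap.pi_apply]
      rcases Nat.eq_zero_or_pos jj with h0 | hpos
      · subst h0
        rw [coeff_X_mul']
        have : (1 : Fin 2) ∉ (d 0).support := by
          rw [Finsupp.notMem_support_iff, hd1]
        rw [if_neg this]
        simp
      · obtain ⟨m, rfl⟩ : ∃ m, jj = m + 1 := ⟨jj - 1, by omega⟩
        have hmn : m + 1 ≤ n := by omega
        rw [coeff_X_mul']
        have hmem : (1 : Fin 2) ∈ (d (m+1)).support := by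
          rw [Finsupp.mem_support_iff, hd1]; omega
        rw [if_pos hmem, coeff_pderiv_aux]
        have hsub0 : ((d (m+1) - Finsupp.single 1 1 : Fin 2 →₀ ℕ)) 0 = n - (m+1) := by
          rw [Finsupp.tsub_apply, hd0]; simp [Finsupp.single_apply]
        have hkey : d (m+1) - Finsupp.single 1 1 + Finsupp.single 0 1 = d m := by
          ext a
          fin_cases a <;>
            simp [hd_def, Finsupp.tsub_apply, Finsupp.single_apply] <;> omega
        rw [hsub0, hkey]
        have hjne : ¬ ((⟨m+1, hjj⟩ : Fin (n+1)) : ℕ) = 0 := by simp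
        rw [if_neg hjne, LinearMap.proj_apply]
        have hsub1 : (⟨m+1, hjj⟩ : Fin (n+1)) - 1 = ⟨m, by omega⟩ := by
          apply Fin.ext
          rw [Fin.coe_sub_one, if_neg (by simp [Fin.ext_iff] : ¬(⟨m+1,hjj⟩ : Fin (n+1)) = 0)]
          simp
        rw [hsub1, LinearMap.pi_apply, LinearMap.smul_apply, lcoeff_apply]
        have harith : (n - (m+1) + 1 : ℕ) = n - m := by omega
        rw [harith]
        -- scalar identity
        have ht : n - m = (n - (m+1)) + 1 := by omega
        have : c (m+1) * (-2 * (((n - m : ℕ) : k) * coeff (d m) f))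
            = c m * coeff (d m) f := by
          rw [hc_def]
          simp only []
          rw [ht, pow_succ, Nat.factorial_succ]
          push_cast
          ring
        simp only [smul_eq_mul, Fin.val_mk]
        exact this
    · -- intertwine H
      intro f _
      funext j
      obtain ⟨jj, hjj⟩ := j
      rw [LinearMap.pi_apply, LinearMap.smul_apply, lcoeff_apply, adH_apply, coeff_smul]
      rw [modelH, LinearMap.pi_apply, LinearMap.smul_apply, LinearMap.proj_apply,
        LinearMap.pi_apply, LinearMap.smul_apply, lcoeff_apply]
      rcases Nat.eq_zero_or_pos jj with h0 | hpos
      · subst h0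
        rw [coeff_X_mul']
        have : (1 : Fin 2) ∉ (d 0).support := by
          rw [Finsupp.notMem_support_iff, hd1]
        rw [if_neg this]
        simp
      · rw [coeff_X_mul']
        have hmem : (1 : Fin 2) ∈ (d jj).support := by
          rw [Finsupp.mem_support_iff, hd1]; omega
        rw [if_pos hmem, coeff_pderiv_aux]
        have hsub1 : ((d jj - Finsupp.single 1 1 : Fin 2 →₀ ℕ)) 1 = jj - 1 := by
          rw [Finsupp.tsub_apply, hd1]; simp
        have hkey : d jj - Finsupp.single 1 1 + Finsupp.single 1 1 = d jj := by
          apply tsub_add_cancel_of_le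
          rw [Finsupp.single_le_iff, hd1]; omega
        rw [hsub1, hkey]
        have harith : (jj - 1 + 1 : ℕ) = jj := by omega
        rw [harith]
        show c jj * (-2 * (((jj:ℕ):k) * coeff (d jj) f))
          = (((-2 : ℤ) * ((jj:ℕ) : ℤ) : ℤ) : k) • (c jj * coeff (d jj) f)
        rw [smul_eq_mul]
        push_cast
        ring
    · -- injectivity
      intro f hf hzero
      rw [mem_homogeneousSubmodule] at hf
      rw [MvPolynomial.eq_zero_iff]
      intro m
      by_contra hm
      have hdeg : m.degree = n := by
        rw [Finsupp.degree_eq_weight_one]; exact hf hm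
      rw [degree_fin2] at hdeg
      have hj : m 1 ≤ n := by omega
      have hmd : m = d (m 1) := by
        ext a
        fin_cases a <;> simp [hd_def, Finsupp.single_apply] <;> omega
      have := congrFun hzero ⟨m 1, by omega⟩
      rw [LinearMap.pi_apply, LinearMap.smul_apply, lcoeff_apply, smul_eq_mul] at this
      simp only [Pi.zero_apply] at this
      rcases mul_eq_zero.mp this with h | h
      · exact hc_ne _ hj h
      · rw [← hmd] at h
        exact hm h
    · -- surjectivity
      intro v
      refine ⟨∑ j : Fin (n+1), monomial (d (j:ℕ)) ((c (j:ℕ))⁻¹ * v j), ?_, ?_⟩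
      · apply Submodule.sum_mem
        intro j _
        rw [mem_homogeneousSubmodule]
        apply isHomogeneous_monomial
        rw [degree_fin2, hd0, hd1]
        omega
      · funext j
        rw [LinearMap.pi_apply, LinearMap.smul_apply, lcoeff_apply, smul_eq_mul,
          coeff_sum]
        have hdinj : ∀ j' : Fin (n+1), j' ≠ j → d (j':ℕ) ≠ d (j:ℕ) := by
          intro j' hne hc
          apply hne
          apply Fin.ext
          have := congrArg (fun s => s 1) hc
          simpa [hd1] using this
        rw [Finset.sum_eq_single_of_mem j (Finset.mem_univ j)]
        · rw [coeff_monomial, if_pos rfl]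
          field_simp [hc_ne _ (by omega : (j:ℕ) ≤ n)]
        · intro j' _ hne
          rw [coeff_monomial, if_neg (hdinj j' hne)]
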